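/- Let T = Trian(A, M, B) be a triangular algebra over R such that the algebras A and B have only trivial idempotents. Then every algebra automorphism σ of T is of the form σ(a, m, b) = (f(a), f(a)·m₀ − m₀·g(b) + ν(m), g(b)) for all (a, m, b) ∈ T, where f is an algebra automorphism of A, g is an algebra automorphism of B, m₀ is an element of M, and ν : M → M is a bijective R-linear map satisfying ν(a·m) = f(a)·ν(m) and ν(m·b) = ν(m)·g(b) for all a ∈ A, b ∈ B, m ∈ M. -/

import Mathlib

/-!
Triangular algebras `Trian(A, M, B)` realized on the type `A × M × B`, where `A`, `B` are
unital associative `R`-algebras and `M` is an `(A, B)`-bimodule (a left `A`-module and a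
right `B`-module, the right action being encoded as a left `Bᵐᵒᵖ`-action, written
`op b • m`, with the two actions commuting), compatible with the `R`-module structure.
-/

set_option linter.unusedSectionVars false

open MulOpposite

variable {R A B M : Type*} [CommRing R] [Ring A] [Ring B]
  [Algebra R A] [Algebra R B]
  [AddCommGroup M] [Module R M]
  [Module A M] [Module Bᵐᵒᵖ M]
  [SMulCommClass A Bᵐᵒᵖ M]
  [IsScalarTower R A M] [SMulCommClass R A M]
  [IsScalarTower R Bᵐᵒᵖ M] [SMulCommClass R Bᵐᵒᵖ M]

/-- Multiplication of the triangular algebra `Trian(A, M, B)`: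
`(a, m, b) * (a', m', b') = (a * a', a • m' + m • b', b * b')`, where the right action of
`B` on `M` is written `op b • m`. -/
instance triMul : Mul (A × M × B) :=
  ⟨fun x y => (x.1 * y.1, x.1 • y.2.1 + op y.2.2 • x.2.1, x.2.2 * y.2.2)⟩

theorem tri_mul_def (x y : A × M × B) :
    x * y = (x.1 * y.1, x.1 • y.2.1 + op y.2.2 • x.2.1, x.2.2 * y.2.2) := rfl

instance triOne : One (A × M × B) := ⟨(1, 0, 1)⟩

theorem tri_one_def : (1 : A × M × B) = (1, 0, 1) := rfl

/-- The triangular algebra `Trian(A, M, B)` as a ring structure on `A × M × B`. -/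
instance triRing : Ring (A × M × B) where
  __ := (inferInstance : AddCommGroup (A × M × B))
  __ := triMul
  __ := triOne
  left_distrib x y z := by
    refine Prod.ext ?_ (Prod.ext ?_ ?_) <;>
      simp [tri_mul_def, mul_add, smul_add, add_smul, Prod.fst_add, Prod.snd_add] <;> abel
  right_distrib x y z := by
    refine Prod.ext ?_ (Prod.ext ?_ ?_) <;>
      simp [tri_mul_def, add_mul, smul_add, add_smul, Prod.fst_add, Prod.snd_add] <;> abel
  zero_mul x := by
    refine Prod.ext ?_ (Prod.ext ?_ ?_) <;> simp [tri_mul_def]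
  mul_zero x := by
    refine Prod.ext ?_ (Prod.ext ?_ ?_) <;> simp [tri_mul_def]
  mul_assoc x y z := by
    refine Prod.ext (mul_assoc _ _ _) (Prod.ext ?_ (mul_assoc _ _ _))
    show (x.1 * y.1) • z.2.1 + op z.2.2 • (x.1 • y.2.1 + op y.2.2 • x.2.1)
        = x.1 • (y.1 • z.2.1 + op z.2.2 • y.2.1) + op (y.2.2 * z.2.2) • x.2.1
    rw [mul_smul, smul_add, smul_add, op_mul, mul_smul, smul_comm x.1 (op z.2.2)]
    abel
  one_mul x := by
    refine Prod.ext (one_mul _) (Prod.ext ?_ (one_mul _))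
    show (1 : A) • x.2.1 + op x.2.2 • (0 : M) = x.2.1
    simp
  mul_one x := by
    refine Prod.ext (mul_one _) (Prod.ext ?_ (mul_one _))
    show x.1 • (0 : M) + op (1 : B) • x.2.1 = x.2.1
    simp

/-- The triangular algebra `Trian(A, M, B)` as an `R`-algebra. -/
instance triAlgebra : Algebra R (A × M × B) :=
  Algebra.ofModule
    (fun r x y => by
      refine Prod.ext ?_ (Prod.ext ?_ ?_)
      · exact smul_mul_assoc r x.1 y.1
      · show (r • x.1) • y.2.1 + op y.2.2 • (r • x.2.1) = r • (x.1 • y.2.1 + op y.2.2 • x.2.1)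
        rw [smul_assoc, smul_add, smul_comm (op y.2.2) r]
      · exact smul_mul_assoc r x.2.2 y.2.2)
    (fun r x y => by
      refine Prod.ext ?_ (Prod.ext ?_ ?_)
      · exact mul_smul_comm r x.1 y.1
      · show x.1 • (r • y.2.1) + op (r • y.2.2) • x.2.1 = r • (x.1 • y.2.1 + op y.2.2 • x.2.1)
        rw [op_smul, smul_assoc, smul_add, smul_comm x.1 r]
      · exact mul_smul_comm r x.2.2 y.2.2)

/-- Every algebra automorphism of a triangular algebra whose corner
algebras have only trivial idempotents is of the standard form. -/
theorem automorphism_standard_form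
    [Nontrivial M] [FaithfulSMul A M] [FaithfulSMul Bᵐᵒᵖ M]
    (hA : ∀ e : A, e * e = e → e = 0 ∨ e = 1)
    (hB : ∀ e : B, e * e = e → e = 0 ∨ e = 1)
    (σ : (A × M × B) ≃ₐ[R] (A × M × B)) :
    ∃ (f : A ≃ₐ[R] A) (g : B ≃ₐ[R] B) (m₀ : M) (ν : M ≃ₗ[R] M),
      (∀ (a : A) (m : M), ν (a • m) = f a • ν m) ∧
      (∀ (m : M) (b : B), ν (op b • m) = op (g b) • ν m) ∧
      ∀ (a : A) (m : M) (b : B),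
        σ (a, m, b) = (f a, f a • m₀ - op (g b) • m₀ + ν m, g b) := by
  obtain ⟨mstar, hmstar⟩ := exists_ne (0 : M)
  have hA1 : (1 : A) ≠ 0 := fun h => hmstar (by rw [← one_smul A mstar, h, zero_smul])
  have hB1 : (1 : B) ≠ 0 := fun h => hmstar (by
    rw [← one_smul Bᵐᵒᵖ mstar, show (1 : Bᵐᵒᵖ) = op (1 : B) from rfl, h, op_zero, zero_smul])
  -- The idempotent e = (1,0,0) and its image E.
  have he : ((1, 0, 0) : A × M × B) * (1, 0, 0) = (1, 0, 0) := by simp [tri_mul_def]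
  set E := σ (1, 0, 0) with hEdef
  have hEE : E * E = E := by rw [hEdef, ← map_mul, he]
  have hE1 : E.1 * E.1 = E.1 := congrArg Prod.fst hEE
  have hE3 : E.2.2 * E.2.2 = E.2.2 := congrArg (fun x : A × M × B => x.2.2) hEE
  have h001 : ((0, 0, 1) : A × M × B) = 1 - (1, 0, 0) := by
    simp [tri_one_def, Prod.ext_iff]
  have hF : σ (0, 0, 1) = 1 - E := by rw [h001, map_sub, map_one, hEdef]
  -- Rule out the bad cases to get E.2.2 = 0 and E.1 = 1.
  have hq : E.2.2 = 0 := by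
    rcases hB E.2.2 hE3 with h | h
    · exact h
    exfalso
    rcases hA E.1 hE1 with h1 | h1
    · -- case E.1 = 0, E.2.2 = 1
      have hprod : ((1, 0, 0) : A × M × B) * (0, mstar, 0) * (0, 0, 1) = (0, mstar, 0) := by
        simp [tri_mul_def]
      have h2 : σ (0, mstar, 0) = E * σ (0, mstar, 0) * (1 - E) := by
        conv_lhs => rw [← hprod]
        rw [map_mul, map_mul, hF, hEdef]
      have h3 : E * σ (0, mstar, 0) * (1 - E) = 0 := by
        rw [tri_mul_def, tri_mul_def]
        refine Prod.ext ?_ (Prod.ext ?_ ?_) <;>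
          simp [h1, h, Prod.ext_iff, tri_one_def]
      rw [h3] at h2
      have h4 : ((0, mstar, 0) : A × M × B) = 0 := by
        have := σ.injective (h2.trans (map_zero σ).symm)
        exact this
      exact hmstar (congrArg (fun x : A × M × B => x.2.1) h4)
    · -- case E.1 = 1, E.2.2 = 1
      have hFF : (1 - E) * (1 - E) = 1 - E := by
        rw [← hF, ← map_mul]
        congr 1
        simp [tri_mul_def]
      have h3 : (1 - E) * (1 - E) = 0 := by
        rw [tri_mul_def]
        refine Prod.ext ?_ (Prod.ext ?_ ?_) <;>
          simp [h1, h, Prod.ext_iff, tri_one_def]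
      have h4 : σ (0, 0, 1) = 0 := by rw [hF, ← hFF, h3]
      have h5 : ((0, 0, 1) : A × M × B) = 0 :=
        σ.injective (h4.trans (map_zero σ).symm)
      exact hB1 (congrArg (fun x : A × M × B => x.2.2) h5)
  have hp : E.1 = 1 := by
    rcases hA E.1 hE1 with h | h
    · exfalso
      have hmid : E.1 • E.2.1 + op E.2.2 • E.2.1 = E.2.1 :=
        congrArg (fun x : A × M × B => x.2.1) hEE
      rw [h, hq] at hmid
      simp only [zero_smul, op_zero, add_zero, zero_add] at hmid
      have hE0 : E = 0 := by
        refine Prod.ext h (Prod.ext ?_ hq)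
        exact hmid.symm
      have h5 : ((1, 0, 0) : A × M × B) = 0 :=
        σ.injective (hE0.trans (map_zero σ).symm)
      exact hA1 (congrArg Prod.fst h5)
    · exact h
  -- So σ (1,0,0) = (1, m₀, 0) with m₀ := E.2.1, and σ (0,0,1) = (0, -m₀, 1).
  have hEeq : E = (1, E.2.1, 0) := Prod.ext hp (Prod.ext rfl hq)
  have hFeq : σ (0, 0, 1) = (0, -E.2.1, 1) := by
    rw [hF]
    refine Prod.ext ?_ (Prod.ext ?_ ?_) <;>
      simp [tri_one_def, hp, hq, Prod.ext_iff]
  -- Key structural lemmas.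
  have key1 : ∀ a : A, σ (a, 0, 0) = ((σ (a, 0, 0)).1, (σ (a, 0, 0)).1 • E.2.1, (0 : B)) := by
    intro a
    have hprod : ((1, 0, 0) : A × M × B) * (a, 0, 0) * (1, 0, 0) = (a, 0, 0) := by
      simp [tri_mul_def]
    have h2 : σ (a, 0, 0) = E * σ (a, 0, 0) * E := by
      conv_lhs => rw [← hprod]
      rw [map_mul, map_mul, hEdef]
    conv_lhs => rw [h2]
    rw [tri_mul_def, tri_mul_def]
    refine Prod.ext ?_ (Prod.ext ?_ ?_) <;>
      simp [hp, hq]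
  have key2 : ∀ b : B,
      σ (0, 0, b) = ((0 : A), -op (σ (0, 0, b)).2.2 • E.2.1, (σ (0, 0, b)).2.2) := by
    intro b
    have hprod : ((0, 0, 1) : A × M × B) * (0, 0, b) * (0, 0, 1) = (0, 0, b) := by
      simp [tri_mul_def]
    have h2 : σ (0, 0, b) = (0, -E.2.1, 1) * σ (0, 0, b) * (0, -E.2.1, 1) := by
      conv_lhs => rw [← hprod]
      rw [map_mul, map_mul, hFeq]
    conv_lhs => rw [h2]
    rw [tri_mul_def, tri_mul_def]
    refine Prod.ext ?_ (Prod.ext ?_ ?_) <;>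
      simp
  have key3 : ∀ m : M, σ (0, m, 0) = ((0 : A), (σ (0, m, 0)).2.1, (0 : B)) := by
    intro m
    have hprod : ((1, 0, 0) : A × M × B) * (0, m, 0) * (0, 0, 1) = (0, m, 0) := by
      simp [tri_mul_def]
    have h2 : σ (0, m, 0) = E * σ (0, m, 0) * (0, -E.2.1, 1) := by
      conv_lhs => rw [← hprod]
      rw [map_mul, map_mul, hFeq, hEdef]
    have h1 : (σ (0, m, 0)).1 = 0 := by
      conv_lhs => rw [h2]
      show E.1 * (σ (0, m, 0)).1 * 0 = 0
      rw [mul_zero]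
    have h3 : (σ (0, m, 0)).2.2 = 0 := by
      conv_lhs => rw [h2]
      show E.2.2 * (σ (0, m, 0)).2.2 * 1 = 0
      rw [hq, zero_mul, zero_mul]
    exact Prod.ext h1 (Prod.ext rfl h3)
  -- The decomposition formula.
  have hadd : ∀ (a : A) (m : M) (b : B),
      ((a, m, b) : A × M × B) = (a, 0, 0) + (0, m, 0) + (0, 0, b) := by
    intro a m b
    simp [Prod.ext_iff]
  have formula : ∀ (a : A) (m : M) (b : B),
      σ (a, m, b) = ((σ (a, 0, 0)).1,
        (σ (a, 0, 0)).1 • E.2.1 - op (σ (0, 0, b)).2.2 • E.2.1 + (σ (0, m, 0)).2.1,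
        (σ (0, 0, b)).2.2) := by
    intro a m b
    rw [hadd, map_add, map_add]
    conv_lhs => rw [key1 a, key3 m, key2 b]
    refine Prod.ext ?_ (Prod.ext ?_ ?_) <;>
      simp [Prod.ext_iff, sub_eq_add_neg] <;> abel
  -- The automorphism f of A.
  have mul100 : ∀ a a' : A, ((a, 0, 0) : A × M × B) * (a', 0, 0) = (a * a', 0, 0) := by
    intro a a'; simp [tri_mul_def]
  have fmul : ∀ a a' : A, (σ (a * a', 0, 0)).1 = (σ (a, 0, 0)).1 * (σ (a', 0, 0)).1 := by
    intro a a'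
    rw [← mul100, map_mul]
    rfl
  have fadd : ∀ a a' : A, (σ (a + a', 0, 0)).1 = (σ (a, 0, 0)).1 + (σ (a', 0, 0)).1 := by
    intro a a'
    rw [show ((a + a', 0, 0) : A × M × B) = (a, 0, 0) + (a', 0, 0) by simp [Prod.ext_iff],
      map_add]
    rfl
  have fcomm : ∀ r : R, (σ (algebraMap R A r, 0, 0)).1 = algebraMap R A r := by
    intro r
    have h1 : ((algebraMap R A r, 0, 0) : A × M × B) = r • (1, 0, 0) := by
      simp [Prod.ext_iff, Algebra.algebraMap_eq_smul_one]
    rw [h1, map_smul]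
    show r • E.1 = _
    rw [hp, Algebra.algebraMap_eq_smul_one]
  let fHom : A →ₐ[R] A :=
    { toFun := fun a => (σ (a, 0, 0)).1
      map_one' := hp
      map_mul' := fmul
      map_zero' := by
        show (σ (0, 0, 0)).1 = 0
        rw [show ((0, 0, 0) : A × M × B) = 0 from rfl, map_zero]
        rfl
      map_add' := fadd
      commutes' := fcomm }
  have finj : Function.Injective fHom := by
    rw [injective_iff_map_eq_zero]
    intro a ha
    have h2 : σ (a, 0, 0) = 0 := by
      rw [key1 a]
      show ((fHom a : A), (fHom a : A) • E.2.1, (0 : B)) = 0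
      rw [ha, zero_smul]
      rfl
    have h3 : ((a, 0, 0) : A × M × B) = 0 := σ.injective (h2.trans (map_zero σ).symm)
    exact congrArg Prod.fst h3
  have fsurj : Function.Surjective fHom := by
    intro a'
    refine ⟨(σ.symm (a', 0, 0)).1, ?_⟩
    have h1 : σ ((σ.symm (a', 0, 0)).1, (σ.symm (a', 0, 0)).2.1, (σ.symm (a', 0, 0)).2.2)
        = (a', 0, 0) := σ.apply_symm_apply _
    have h2 := (formula _ _ _).symm.trans h1
    exact congrArg Prod.fst h2
  -- The automorphism g of B.
  have mul001 : ∀ b b' : B, ((0, 0, b) : A × M × B) * (0, 0, b') = (0, 0, b * b') := by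
    intro b b'; simp [tri_mul_def]
  let gHom : B →ₐ[R] B :=
    { toFun := fun b => (σ (0, 0, b)).2.2
      map_one' := congrArg (fun x : A × M × B => x.2.2) hFeq
      map_mul' := by
        intro b b'
        show (σ (0, 0, b * b')).2.2 = _
        rw [← mul001, map_mul]
        rfl
      map_zero' := by
        show (σ (0, 0, 0)).2.2 = 0
        rw [show ((0, 0, 0) : A × M × B) = 0 from rfl, map_zero]
        rfl
      map_add' := by
        intro b b'
        show (σ (0, 0, b + b')).2.2 = _
        rw [show ((0, 0, b + b') : A × M × B) = (0, 0, b) + (0, 0, b') by simp [Prod.ext_iff],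
          map_add]
        rfl
      commutes' := by
        intro r
        have h1 : ((0, 0, algebraMap R B r) : A × M × B) = r • (0, 0, 1) := by
          simp [Prod.ext_iff, Algebra.algebraMap_eq_smul_one]
        show (σ (0, 0, algebraMap R B r)).2.2 = _
        rw [h1, map_smul]
        show r • (σ (0, 0, 1)).2.2 = _
        rw [hFeq, Algebra.algebraMap_eq_smul_one] }
  have ginj : Function.Injective gHom := by
    rw [injective_iff_map_eq_zero]
    intro b hb
    have h2 : σ (0, 0, b) = 0 := by
      rw [key2 b]
      show ((0 : A), -op (gHom b : B) • E.2.1, (gHom b : B)) = 0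
      rw [hb, op_zero, neg_zero, zero_smul]
      rfl
    have h3 : ((0, 0, b) : A × M × B) = 0 := σ.injective (h2.trans (map_zero σ).symm)
    exact congrArg (fun x : A × M × B => x.2.2) h3
  have gsurj : Function.Surjective gHom := by
    intro b'
    refine ⟨(σ.symm (0, 0, b')).2.2, ?_⟩
    have h1 : σ ((σ.symm (0, 0, b')).1, (σ.symm (0, 0, b')).2.1, (σ.symm (0, 0, b')).2.2)
        = (0, 0, b') := σ.apply_symm_apply _
    have h2 := (formula _ _ _).symm.trans h1
    exact congrArg (fun x : A × M × B => x.2.2) h2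
  -- The linear bijection ν of M.
  let nuL : M →ₗ[R] M :=
    { toFun := fun m => (σ (0, m, 0)).2.1
      map_add' := by
        intro m m'
        show (σ (0, m + m', 0)).2.1 = _
        rw [show ((0, m + m', 0) : A × M × B) = (0, m, 0) + (0, m', 0) by simp [Prod.ext_iff],
          map_add]
        rfl
      map_smul' := by
        intro r m
        show (σ (0, r • m, 0)).2.1 = r • (σ (0, m, 0)).2.1
        rw [show ((0, r • m, 0) : A × M × B) = r • (0, m, 0) by simp [Prod.ext_iff],
          map_smul]
        rfl }
  have nuinj : Function.Injective nuL := by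
    intro m m' hmm
    have h2 : σ (0, m, 0) = σ (0, m', 0) := by
      rw [key3 m, key3 m']
      exact Prod.ext rfl (Prod.ext hmm rfl)
    have h3 := σ.injective h2
    exact congrArg (fun x : A × M × B => x.2.1) h3
  have nusurj : Function.Surjective nuL := by
    intro m'
    set x := σ.symm (0, m', 0) with hx
    have h1 : σ (x.1, x.2.1, x.2.2) = (0, m', 0) := σ.apply_symm_apply _
    have h2 := (formula _ _ _).symm.trans h1
    have ha : fHom x.1 = 0 := congrArg Prod.fst h2
    have hb : gHom x.2.2 = 0 := congrArg (fun y : A × M × B => y.2.2) h2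
    have hmid : fHom x.1 • E.2.1 - op (gHom x.2.2) • E.2.1 + nuL x.2.1 = m' :=
      congrArg (fun y : A × M × B => y.2.1) h2
    refine ⟨x.2.1, ?_⟩
    rwa [ha, hb, zero_smul, op_zero, zero_smul, sub_zero, zero_add] at hmid
  -- Intertwining relations.
  have nu1 : ∀ (a : A) (m : M), nuL (a • m) = fHom a • nuL m := by
    intro a m
    have hprod : ((a, 0, 0) : A × M × B) * (0, m, 0) = (0, a • m, 0) := by
      simp [tri_mul_def]
    have h2 : σ (0, a • m, 0) = σ (a, 0, 0) * σ (0, m, 0) := by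
      rw [← hprod, map_mul]
    rw [key3 m, key1 a] at h2
    have h3 := congrArg (fun y : A × M × B => y.2.1) h2
    show (σ (0, a • m, 0)).2.1 = (σ (a, 0, 0)).1 • (σ (0, m, 0)).2.1
    simpa [tri_mul_def] using h3
  have nu2 : ∀ (m : M) (b : B), nuL (op b • m) = op (gHom b) • nuL m := by
    intro m b
    have hprod : ((0, m, 0) : A × M × B) * (0, 0, b) = (0, op b • m, 0) := by
      simp [tri_mul_def]
    have h2 : σ (0, op b • m, 0) = σ (0, m, 0) * σ (0, 0, b) := by
      rw [← hprod, map_mul]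
    rw [key3 m, key2 b] at h2
    have h3 := congrArg (fun y : A × M × B => y.2.1) h2
    show (σ (0, op b • m, 0)).2.1 = op (σ (0, 0, b)).2.2 • (σ (0, m, 0)).2.1
    simpa [tri_mul_def] using h3
  -- Assemble.
  refine ⟨AlgEquiv.ofBijective fHom ⟨finj, fsurj⟩, AlgEquiv.ofBijective gHom ⟨ginj, gsurj⟩,
    E.2.1, LinearEquiv.ofBijective nuL ⟨nuinj, nusurj⟩, ?_, ?_, ?_⟩
  · intro a m
    exact nu1 a m
  · intro m b
    exact nu2 m b
  · intro a m b
    exact formula a m b
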